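/- Let H be a Hopf algebra over a field k. The set L of locally affine elements of H (elements contained in some affine, i.e. finitely generated, Hopf subalgebra of H) is a Hopf subalgebra of H, and L is a directed union of affine Hopf subalgebras. -/

import Mathlib

open scoped TensorProduct
open Coalgebra HopfAlgebra

variable {k : Type u} [CommSemiring k] {H : Type v} [Semiring H] [HopfAlgebra k H]

lemma myAntipode_one : antipode (R := k) (1 : H) = 1 := by
  have := mul_antipode_rTensor_comul_apply (R := k) (1 : H)
  simpa [Algebra.TensorProduct.one_def] using this

lemma sum_counit_smul_left {a : H} {ι : Type*} (r : Repr k a ι) :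
    ∑ i ∈ r.index, counit (R := k) (r.right i) • r.left i = a := by
  have := congrArg (TensorProduct.rid k H) (sum_tmul_counit_eq (R := k) r)
  simp only [map_sum, TensorProduct.rid_tmul, one_smul] at this
  exact this

lemma sum_counit_smul_right {a : H} {ι : Type*} (r : Repr k a ι) :
    ∑ i ∈ r.index, counit (R := k) (r.left i) • r.right i = a := by
  have := congrArg (TensorProduct.lid k H) (sum_counit_tmul_eq (R := k) r)
  simp only [map_sum, TensorProduct.lid_tmul, one_smul] at this
  exact this

/-- product of two representations -/
noncomputable def mulRepr {a b : H} {ι κ : Type*} (ra : Repr k a ι) (rb : Repr k b κ) :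
    Repr k (a * b) (ι × κ) where
  index := ra.index ×ˢ rb.index
  left p := ra.left p.1 * rb.left p.2
  right p := ra.right p.1 * rb.right p.2
  eq := by
    rw [Finset.sum_product,
      show (CoalgebraStruct.comul (R := k) (a * b) : H ⊗[k] H)
          = CoalgebraStruct.comul (R := k) a * CoalgebraStruct.comul (R := k) b from
        Bialgebra.comul_mul a b,
      ← ra.eq, ← rb.eq, Finset.sum_mul_sum]
    simp [Algebra.TensorProduct.tmul_mul_tmul]

variable {k : Type u} [CommSemiring k] {H : Type v} [Semiring H] [HopfAlgebra k H]

/-- auxiliary trilinear map `x ⊗ (y ⊗ z) ↦ c * S x * (y * d) * S (e * z * e')` -/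
noncomputable def lamN (c d e e' : H) : H →ₗ[k] H →ₗ[k] H →ₗ[k] H :=
  LinearMap.mk₂ k
    (fun x y => (LinearMap.mulLeft k (c * antipode (R := k) x * (y * d))) ∘ₗ
        antipode (R := k) ∘ₗ (LinearMap.mulRight k e') ∘ₗ (LinearMap.mulLeft k e))
    (by intro x x' y; ext z; simp [map_add, add_mul, mul_add, mul_assoc])
    (by intro r x y; ext z; simp [map_smul, smul_mul_assoc, mul_assoc])
    (by intro x y y'; ext z; simp [mul_add, add_mul, mul_assoc])
    (by intro x r y; ext z; simp [smul_mul_assoc, mul_smul_comm, mul_assoc])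

noncomputable def lam (c d e e' : H) : H ⊗[k] (H ⊗[k] H) →ₗ[k] H :=
  TensorProduct.lift ((TensorProduct.uncurry (RingHom.id k) H H H) ∘ₗ lamN c d e e')

@[simp] lemma lam_tmul (c d e e' x y z : H) :
    lam (k := k) c d e e' (x ⊗ₜ (y ⊗ₜ z)) =
      c * antipode (R := k) x * (y * d) * antipode (R := k) (e * z * e') := by
  simp [lam, lamN, mul_assoc]

lemma repr_coassoc {a : H} {ι ι₁ ι₂ : Type*} (ra : Repr k a ι)
    (ra1 : ∀ i : ι, Repr k (ra.left i) ι₁) (ra2 : ∀ i : ι, Repr k (ra.right i) ι₂) :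
    ∑ i ∈ ra.index, ∑ t ∈ (ra2 i).index,
        ra.left i ⊗ₜ[k] ((ra2 i).left t ⊗ₜ[k] (ra2 i).right t)
    = ∑ i ∈ ra.index, ∑ s ∈ (ra1 i).index,
        (ra1 i).left s ⊗ₜ[k] ((ra1 i).right s ⊗ₜ[k] ra.right i) := by
  have lhs_eq : ∑ i ∈ ra.index, ∑ t ∈ (ra2 i).index,
      ra.left i ⊗ₜ[k] ((ra2 i).left t ⊗ₜ[k] (ra2 i).right t)
      = (Coalgebra.comul (R := k)).lTensor H (Coalgebra.comul (R := k) a) := by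
    rw [show (Coalgebra.comul (R := k) a : H ⊗[k] H) = ∑ i ∈ ra.index,
        ra.left i ⊗ₜ[k] ra.right i from ra.eq.symm]
    rw [map_sum]
    refine Finset.sum_congr rfl fun i _ => ?_
    rw [LinearMap.lTensor_tmul,
      show (Coalgebra.comul (R := k) (ra.right i) : H ⊗[k] H) = ∑ t ∈ (ra2 i).index,
        (ra2 i).left t ⊗ₜ[k] (ra2 i).right t from (ra2 i).eq.symm,
      TensorProduct.tmul_sum]
  have rhs_eq : ∑ i ∈ ra.index, ∑ s ∈ (ra1 i).index,
      (ra1 i).left s ⊗ₜ[k] ((ra1 i).right s ⊗ₜ[k] ra.right i)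
      = TensorProduct.assoc k H H H
          ((Coalgebra.comul (R := k)).rTensor H (Coalgebra.comul (R := k) a)) := by
    rw [show (Coalgebra.comul (R := k) a : H ⊗[k] H) = ∑ i ∈ ra.index,
        ra.left i ⊗ₜ[k] ra.right i from ra.eq.symm]
    rw [map_sum, map_sum]
    refine Finset.sum_congr rfl fun i _ => ?_
    rw [LinearMap.rTensor_tmul,
      show (Coalgebra.comul (R := k) (ra.left i) : H ⊗[k] H) = ∑ s ∈ (ra1 i).index,
        (ra1 i).left s ⊗ₜ[k] (ra1 i).right s from (ra1 i).eq.symm,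
      TensorProduct.sum_tmul, map_sum]
    simp [TensorProduct.assoc_tmul]
  rw [lhs_eq, rhs_eq, Coalgebra.coassoc_apply]

lemma lam_sum_eq (c d e e' : H) {a : H} {ι ι₁ ι₂ : Type*} (ra : Repr k a ι)
    (ra1 : ∀ i : ι, Repr k (ra.left i) ι₁) (ra2 : ∀ i : ι, Repr k (ra.right i) ι₂) :
    ∑ i ∈ ra.index, ∑ t ∈ (ra2 i).index,
        c * antipode (R := k) (ra.left i) * ((ra2 i).left t * d)
          * antipode (R := k) (e * (ra2 i).right t * e')
    = ∑ i ∈ ra.index, ∑ s ∈ (ra1 i).index,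
        c * antipode (R := k) ((ra1 i).left s) * ((ra1 i).right s * d)
          * antipode (R := k) (e * ra.right i * e') := by
  have h := congrArg (lam (k := k) c d e e') (repr_coassoc ra ra1 ra2)
  simpa [map_sum] using h

lemma collapse_sum (c d E : H) {x : H} {ι : Type*} (rx : Repr k x ι) :
    ∑ s ∈ rx.index, c * antipode (R := k) (rx.left s) * (rx.right s * d) * E
      = counit (R := k) x • (c * (d * E)) := by
  calc ∑ s ∈ rx.index, c * antipode (R := k) (rx.left s) * (rx.right s * d) * E
      = ∑ s ∈ rx.index, c * ((antipode (R := k) (rx.left s) * rx.right s) * (d * E)) := by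
        refine Finset.sum_congr rfl fun s _ => by simp [mul_assoc]
    _ = c * ((∑ s ∈ rx.index, antipode (R := k) (rx.left s) * rx.right s) * (d * E)) := by
        rw [Finset.sum_mul, Finset.mul_sum]
    _ = counit (R := k) x • (c * (d * E)) := by
        rw [sum_antipode_mul_eq_smul rx]
        simp [smul_mul_assoc, mul_smul_comm]

lemma myAntipode_mul (a b : H) :
    antipode (R := k) (a * b) = antipode (R := k) b * antipode (R := k) a := by
  classical
  set S : H →ₗ[k] H := antipode (R := k) with hS
  let ra := Repr.arbitrary k a
  let rb := Repr.arbitrary k b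
  let ra1 : ∀ i : H × H, Repr k (ra.left i) (H × H) := fun i => Repr.arbitrary k (ra.left i)
  let ra2 : ∀ i : H × H, Repr k (ra.right i) (H × H) := fun i => Repr.arbitrary k (ra.right i)
  let rb1 : ∀ j : H × H, Repr k (rb.left j) (H × H) := fun j => Repr.arbitrary k (rb.left j)
  let rb2 : ∀ j : H × H, Repr k (rb.right j) (H × H) := fun j => Repr.arbitrary k (rb.right j)
  -- the quadruple-sum expression
  set F : H × H → H × H → H := fun j i =>
    ∑ t ∈ (ra2 i).index, ∑ u ∈ (rb2 j).index,
      S (rb.left j) * S (ra.left i) * ((ra2 i).left t * (rb2 j).left u)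
        * S (1 * ((ra2 i).right t * (rb2 j).right u) * 1) with hF
  -- Step 1 : S b * S a = ∑_j ∑_i F j i
  have step1 : S b * S a = ∑ j ∈ rb.index, ∑ i ∈ ra.index, F j i := by
    conv_lhs => rw [show a = ∑ i ∈ ra.index, counit (R := k) (ra.right i) • ra.left i from
        (sum_counit_smul_left ra).symm,
      show b = ∑ j ∈ rb.index, counit (R := k) (rb.right j) • rb.left j from
        (sum_counit_smul_left rb).symm]
    rw [map_sum, map_sum, Finset.sum_mul_sum]
    refine Finset.sum_congr rfl fun j _ => Finset.sum_congr rfl fun i _ => ?_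
    -- per (j,i) : ε(a2 i)ε(b2 j) • (S b1 * S a1) = F j i
    have hmul := sum_mul_antipode_eq_smul (R := k) (mulRepr (ra2 i) (rb2 j))
    simp only [mulRepr] at hmul
    rw [Finset.sum_product] at hmul
    have : F j i = (S (rb.left j) * S (ra.left i)) *
        (counit (R := k) (ra.right i * rb.right j) • 1) := by
      rw [hF]
      dsimp only
      rw [← hmul, Finset.mul_sum]
      refine Finset.sum_congr rfl fun t _ => ?_
      rw [Finset.mul_sum]
      refine Finset.sum_congr rfl fun u _ => by simp [mul_assoc, hS]
    rw [this, Bialgebra.counit_mul]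
    simp [map_smul, smul_smul, mul_smul_comm, smul_mul_assoc, mul_comm]
  -- Step 2 : reorder the quadruple sum
  have step2 : ∑ j ∈ rb.index, ∑ i ∈ ra.index, F j i
      = ∑ j ∈ rb.index, ∑ u ∈ (rb2 j).index, ∑ i ∈ ra.index, ∑ t ∈ (ra2 i).index,
          S (rb.left j) * S (ra.left i) * ((ra2 i).left t * (rb2 j).left u)
            * S (1 * (ra2 i).right t * (rb2 j).right u) := by
    refine Finset.sum_congr rfl fun j _ => ?_
    have : ∀ i, F j i = ∑ t ∈ (ra2 i).index, ∑ u ∈ (rb2 j).index,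
        S (rb.left j) * S (ra.left i) * ((ra2 i).left t * (rb2 j).left u)
          * S (1 * (ra2 i).right t * (rb2 j).right u) := by
      intro i
      rw [hF]
      exact Finset.sum_congr rfl fun t _ => Finset.sum_congr rfl fun u _ => by
        simp [mul_assoc]
    simp only [this]
    rw [Finset.sum_comm]
    exact Finset.sum_congr rfl fun u _ => Finset.sum_comm
  -- Step 3 : coassociativity on the `a` side, then collapse
  have step3 : ∀ j, ∀ u,
      ∑ i ∈ ra.index, ∑ t ∈ (ra2 i).index,
          S (rb.left j) * S (ra.left i) * ((ra2 i).left t * (rb2 j).left u)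
            * S (1 * (ra2 i).right t * (rb2 j).right u)
      = ∑ i ∈ ra.index, counit (R := k) (ra.left i) •
          (S (rb.left j) * ((rb2 j).left u * S (1 * ra.right i * (rb2 j).right u))) := by
    intro j u
    rw [lam_sum_eq (S (rb.left j)) ((rb2 j).left u) 1 ((rb2 j).right u) ra ra1 ra2]
    exact Finset.sum_congr rfl fun i _ => collapse_sum _ _ _ (ra1 i)
  -- Step 4 : reorder again
  have step4 : ∑ j ∈ rb.index, ∑ u ∈ (rb2 j).index, ∑ i ∈ ra.index,
        counit (R := k) (ra.left i) •
          (S (rb.left j) * ((rb2 j).left u * S (1 * ra.right i * (rb2 j).right u)))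
      = ∑ i ∈ ra.index, counit (R := k) (ra.left i) •
          ∑ j ∈ rb.index, ∑ u ∈ (rb2 j).index,
            (1 : H) * S (rb.left j) * ((rb2 j).left u * 1)
              * S (ra.right i * (rb2 j).right u * 1) := by
    rw [show (∑ j ∈ rb.index, ∑ u ∈ (rb2 j).index, ∑ i ∈ ra.index,
        counit (R := k) (ra.left i) •
          (S (rb.left j) * ((rb2 j).left u * S (1 * ra.right i * (rb2 j).right u))))
        = ∑ i ∈ ra.index, ∑ j ∈ rb.index, ∑ u ∈ (rb2 j).index,
        counit (R := k) (ra.left i) •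
          (S (rb.left j) * ((rb2 j).left u * S (1 * ra.right i * (rb2 j).right u)))
      from (Finset.sum_congr rfl fun j _ => Finset.sum_comm).trans Finset.sum_comm]
    refine Finset.sum_congr rfl fun i _ => ?_
    rw [Finset.smul_sum]
    refine Finset.sum_congr rfl fun j _ => ?_
    rw [Finset.smul_sum]
    exact Finset.sum_congr rfl fun u _ => by simp [mul_assoc]
  -- Step 5 : coassociativity on the `b` side, then collapse
  have step5 : ∀ i, ∑ j ∈ rb.index, ∑ u ∈ (rb2 j).index,
        (1 : H) * S (rb.left j) * ((rb2 j).left u * 1)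
          * S (ra.right i * (rb2 j).right u * 1)
      = ∑ j ∈ rb.index, counit (R := k) (rb.left j) • S (ra.right i * rb.right j) := by
    intro i
    rw [lam_sum_eq (1 : H) (1 : H) (ra.right i) 1 rb rb1 rb2]
    refine Finset.sum_congr rfl fun j _ => ?_
    rw [collapse_sum _ _ _ (rb1 j)]
    simp [hS]
  -- Step 6 : expression for `S (a * b)`
  have step6 : S (a * b) = ∑ i ∈ ra.index, counit (R := k) (ra.left i) •
      ∑ j ∈ rb.index, counit (R := k) (rb.left j) • S (ra.right i * rb.right j) := by
    conv_lhs => rw [show a = ∑ i ∈ ra.index, counit (R := k) (ra.left i) • ra.right i from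
        (sum_counit_smul_right ra).symm,
      show b = ∑ j ∈ rb.index, counit (R := k) (rb.left j) • rb.right j from
        (sum_counit_smul_right rb).symm]
    rw [Finset.sum_mul_sum, map_sum]
    refine Finset.sum_congr rfl fun i _ => ?_
    rw [map_sum, Finset.smul_sum]
    refine Finset.sum_congr rfl fun j _ => ?_
    simp [smul_smul, mul_smul_comm, smul_mul_assoc, map_smul, mul_comm]
  -- put everything together
  rw [step1, step2]
  rw [Finset.sum_congr rfl fun j _ => Finset.sum_congr rfl fun u _ => step3 j u]
  rw [step4, Finset.sum_congr rfl fun i _ => congrArg _ (step5 i), ← step6]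




open scoped TensorProduct

/-- A subalgebra `K` of a Hopf algebra `H` is a Hopf subalgebra if it is stable under
the comultiplication (`Δ(K) ⊆ K ⊗ K`) and under the antipode. -/
def IsHopfSubalgebra {k : Type u} [CommRing k] {H : Type v} [Ring H] [HopfAlgebra k H]
    (K : Subalgebra k H) : Prop :=
  (∀ x ∈ K, Coalgebra.comul (R := k) x ∈
      Submodule.span k {t : H ⊗[k] H | ∃ a ∈ K, ∃ b ∈ K, t = a ⊗ₜ[k] b}) ∧
  (∀ x ∈ K, HopfAlgebra.antipode (R := k) x ∈ K)


section Main

variable {k : Type u} [CommRing k] {H : Type v} [Ring H] [HopfAlgebra k H]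

/-- the span of pure tensors with entries in `K` -/
noncomputable def spanTT (K : Subalgebra k H) : Submodule k (H ⊗[k] H) :=
  Submodule.span k {t : H ⊗[k] H | ∃ a ∈ K, ∃ b ∈ K, t = a ⊗ₜ[k] b}

lemma spanTT_mono {K K' : Subalgebra k H} (h : K ≤ K') : spanTT K ≤ spanTT K' :=
  Submodule.span_mono fun t ⟨a, ha, b, hb, ht⟩ => ⟨a, h ha, b, h hb, ht⟩

lemma spanTT_mul_le (K : Subalgebra k H) : spanTT K * spanTT K ≤ spanTT K := by
  rw [spanTT, Submodule.span_mul_span]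
  refine Submodule.span_le.2 ?_
  rintro t ⟨x, ⟨a, ha, b, hb, hx⟩, y, ⟨c, hc, d, hd, hy⟩, rfl⟩
  subst hx; subst hy
  show _ ∈ Submodule.span k {t : H ⊗[k] H | ∃ a ∈ K, ∃ b ∈ K, t = a ⊗ₜ[k] b}
  rw [show (fun x1 x2 => x1 * x2) (a ⊗ₜ[k] b) (c ⊗ₜ[k] d) = (a * c) ⊗ₜ[k] (b * d) from
    Algebra.TensorProduct.tmul_mul_tmul a c b d]
  exact Submodule.subset_span ⟨a * c, mul_mem ha hc, b * d, mul_mem hb hd, rfl⟩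

lemma one_mem_spanTT (K : Subalgebra k H) : (1 : H ⊗[k] H) ∈ spanTT K := by
  rw [Algebra.TensorProduct.one_def]
  exact Submodule.subset_span ⟨1, one_mem K, 1, one_mem K, rfl⟩

/-- elements whose comultiplication lands in `spanTT Ω`, as a subalgebra -/
noncomputable def comulGood (Ω : Subalgebra k H) : Subalgebra k H where
  carrier := {x : H | Coalgebra.comul (R := k) x ∈ spanTT Ω}
  mul_mem' := fun {x y} hx hy => by
    simp only [Set.mem_setOf_eq] at *
    rw [Bialgebra.comul_mul]
    exact spanTT_mul_le Ω (Submodule.mul_mem_mul hx hy)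
  one_mem' := by
    simp only [Set.mem_setOf_eq, Bialgebra.comul_one]
    exact one_mem_spanTT Ω
  add_mem' := fun {x y} hx hy => by
    simp only [Set.mem_setOf_eq, map_add] at *
    exact add_mem hx hy
  zero_mem' := by simp only [Set.mem_setOf_eq, map_zero]; exact zero_mem _
  algebraMap_mem' := fun r => by
    simp only [Set.mem_setOf_eq, Bialgebra.comul_algebraMap]
    rw [Algebra.algebraMap_eq_smul_one]
    exact Submodule.smul_mem _ r (one_mem_spanTT Ω)

lemma antipode_algebraMap (r : k) :
    HopfAlgebra.antipode (R := k) (algebraMap k H r) = algebraMap k H r := by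
  rw [Algebra.algebraMap_eq_smul_one, map_smul, myAntipode_one]

/-- elements whose antipode lands in `Ω`, as a subalgebra -/
noncomputable def antipodeGood (Ω : Subalgebra k H) : Subalgebra k H where
  carrier := {x : H | HopfAlgebra.antipode (R := k) x ∈ Ω}
  mul_mem' := fun {x y} hx hy => by
    simp only [Set.mem_setOf_eq] at *
    rw [myAntipode_mul]
    exact mul_mem hy hx
  one_mem' := by simp only [Set.mem_setOf_eq, myAntipode_one]; exact one_mem Ω
  add_mem' := fun {x y} hx hy => by
    simp only [Set.mem_setOf_eq, map_add] at *
    exact add_mem hx hy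
  zero_mem' := by simp only [Set.mem_setOf_eq, map_zero]; exact zero_mem _
  algebraMap_mem' := fun r => by
    simp only [Set.mem_setOf_eq, antipode_algebraMap]
    exact Subalgebra.algebraMap_mem Ω r

lemma isHopf_sup {K₁ K₂ : Subalgebra k H} (h₁ : IsHopfSubalgebra K₁)
    (h₂ : IsHopfSubalgebra K₂) : IsHopfSubalgebra (K₁ ⊔ K₂) := by
  constructor
  · have : K₁ ⊔ K₂ ≤ comulGood (K₁ ⊔ K₂) := by
      refine sup_le (fun x hx => ?_) (fun x hx => ?_)
      · show Coalgebra.comul (R := k) x ∈ spanTT (K₁ ⊔ K₂)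
        exact spanTT_mono (show K₁ ≤ K₁ ⊔ K₂ from le_sup_left) (h₁.1 x hx)
      · show Coalgebra.comul (R := k) x ∈ spanTT (K₁ ⊔ K₂)
        exact spanTT_mono (show K₂ ≤ K₁ ⊔ K₂ from le_sup_right) (h₂.1 x hx)
    exact fun x hx => this hx
  · have : K₁ ⊔ K₂ ≤ antipodeGood (K₁ ⊔ K₂) := by
      refine sup_le (fun x hx => ?_) (fun x hx => ?_)
      · show HopfAlgebra.antipode (R := k) x ∈ K₁ ⊔ K₂
        exact (show K₁ ≤ K₁ ⊔ K₂ from le_sup_left) (h₁.2 x hx)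
      · show HopfAlgebra.antipode (R := k) x ∈ K₁ ⊔ K₂
        exact (show K₂ ≤ K₁ ⊔ K₂ from le_sup_right) (h₂.2 x hx)
    exact fun x hx => this hx

lemma isHopf_bot : IsHopfSubalgebra (⊥ : Subalgebra k H) := by
  constructor
  · intro x hx
    obtain ⟨r, rfl⟩ := Algebra.mem_bot.1 hx
    rw [Bialgebra.comul_algebraMap, Algebra.algebraMap_eq_smul_one]
    exact Submodule.smul_mem _ r (one_mem_spanTT ⊥)
  · intro x hx
    obtain ⟨r, rfl⟩ := Algebra.mem_bot.1 hx
    rw [antipode_algebraMap]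
    exact Subalgebra.algebraMap_mem _ r

lemma fg_sup {K₁ K₂ : Subalgebra k H} (h₁ : K₁.FG) (h₂ : K₂.FG) : (K₁ ⊔ K₂).FG := by
  classical
  obtain ⟨s₁, hs₁⟩ := h₁
  obtain ⟨s₂, hs₂⟩ := h₂
  exact ⟨s₁ ∪ s₂, by rw [Finset.coe_union, Algebra.adjoin_union, hs₁, hs₂]⟩

end Main

/-- The set of locally affine elements of a Hopf algebra `H` (elements lying in some
affine Hopf subalgebra) is itself a Hopf subalgebra of `H`, and it is a directed union
of affine Hopf subalgebras. -/
theorem stmt17 {k : Type u} [Field k] {H : Type v} [Ring H] [HopfAlgebra k H]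
    (L : Set H)
    (hL : L = {h : H | ∃ K : Subalgebra k H, IsHopfSubalgebra K ∧ K.FG ∧ h ∈ K}) :
    ∃ KL : Subalgebra k H, (KL : Set H) = L ∧ IsHopfSubalgebra KL ∧
      ∀ s : Finset H, ↑s ⊆ L →
        ∃ Ω : Subalgebra k H, IsHopfSubalgebra Ω ∧ Ω.FG ∧ ↑s ⊆ (Ω : Set H) ∧ Ω ≤ KL := by
  classical
  set Fam : Type _ := {K : Subalgebra k H // IsHopfSubalgebra K ∧ K.FG} with hFam
  haveI : Nonempty Fam := ⟨⟨⊥, isHopf_bot, Subalgebra.fg_bot⟩⟩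
  have hdir : Directed (· ≤ ·) (fun K : Fam => (K : Subalgebra k H)) := by
    rintro ⟨K₁, hh₁, hf₁⟩ ⟨K₂, hh₂, hf₂⟩
    exact ⟨⟨K₁ ⊔ K₂, isHopf_sup hh₁ hh₂, fg_sup hf₁ hf₂⟩, le_sup_left, le_sup_right⟩
  set KL : Subalgebra k H := ⨆ K : Fam, (K : Subalgebra k H) with hKL
  have hmem : ∀ x : H, x ∈ KL ↔ ∃ K : Fam, x ∈ (K : Subalgebra k H) := by
    intro x
    rw [hKL, ← SetLike.mem_coe, Subalgebra.coe_iSup_of_directed hdir]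
    simp
  have hcoe : (KL : Set H) = L := by
    ext x
    rw [hL]
    simp only [SetLike.mem_coe, hmem x, Set.mem_setOf_eq]
    constructor
    · rintro ⟨⟨K, hK, hKfg⟩, hx⟩; exact ⟨K, hK, hKfg, hx⟩
    · rintro ⟨K, hK, hKfg, hx⟩; exact ⟨⟨K, hK, hKfg⟩, hx⟩
  have hle : ∀ K : Fam, (K : Subalgebra k H) ≤ KL := fun K => le_iSup _ K
  refine ⟨KL, hcoe, ⟨?_, ?_⟩, ?_⟩
  · intro x hx
    obtain ⟨K, hxK⟩ := (hmem x).1 hx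
    refine spanTT_mono (K := (K : Subalgebra k H)) (hle K) (K.2.1.1 x hxK)
  · intro x hx
    obtain ⟨K, hxK⟩ := (hmem x).1 hx
    exact hle K (K.2.1.2 x hxK)
  · intro s
    refine Finset.induction_on s (fun _ => ?_) ?_
    · exact ⟨⊥, isHopf_bot, Subalgebra.fg_bot, by simp, bot_le⟩
    · rintro a t - ih hsub
      have hat : ↑t ⊆ L := fun x hx => hsub (Finset.mem_coe.1 hx |> Finset.mem_insert_of_mem)
      obtain ⟨Ω, hΩ, hΩfg, hΩsub, hΩle⟩ := ih hat
      have ha : a ∈ L := hsub (Finset.mem_insert_self a t)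
      rw [hL] at ha
      obtain ⟨K, hK, hKfg, haK⟩ := ha
      refine ⟨Ω ⊔ K, isHopf_sup hΩ hK, fg_sup hΩfg hKfg, ?_, ?_⟩
      · intro x hx
        rcases Finset.mem_insert.1 (Finset.mem_coe.1 hx) with rfl | hxt
        · exact (SetLike.le_def.1 le_sup_right) haK
        · exact (SetLike.le_def.1 le_sup_left) (hΩsub (Finset.mem_coe.2 hxt))
      · exact sup_le hΩle (hle ⟨K, hK, hKfg⟩)
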